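/- The Gauss periods η_i^{(N₂,r)} of order N₂ are rational integers, and consequently the reduced period polynomial ψ*_{(N₂,r)}(X) = Π_{i=0}^{N₂-1}(X - η*_i^{(N₂,r)}) splits completely over the rationals. -/

import Mathlib

open scoped Classical

/-- The Gauss period `η_i^{(N,r)} = Σ_{x ∈ αⁱ·<α^N>} ζ_p^{Tr_{r/p}(x)}`. -/
noncomputable def gaussPeriod (p : ℕ) (F : Type) [Field F] [Fintype F]
    [Algebra (ZMod p) F] (α : Fˣ) (N i : ℕ) : ℂ :=
  ∑ x ∈ Finset.univ.filter (fun x : Fˣ => ∃ j : ℕ, x = α ^ i * (α ^ N) ^ j),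
    Complex.exp (2 * Real.pi * Complex.I *
      ((Algebra.trace (ZMod p) F (x : F)).val : ℂ) / (p : ℂ))

/-- the Gauss periods `η_i^{(N₂,r)}` are rational integers and the
reduced period polynomial `ψ*_{(N₂,r)}(X) = ∏_{i<N₂}(X - (1 + N₂η_i^{(N₂,r)}))`
comes from a polynomial over `ℚ` that splits completely over `ℚ`. -/
theorem stmt8 (p s m N q r N₂ : ℕ) (hp : p.Prime) (hs : 0 < s) (hm : 0 < m)
    (hq : q = p ^ s) (hr : r = q ^ m) (hN : N ∣ r - 1)
    (hN₂ : N₂ = Nat.gcd N ((r - 1) / (q - 1)))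
    (F : Type) [Field F] [Fintype F] [Algebra (ZMod p) F]
    (hcardF : Fintype.card F = r)
    (α : Fˣ) (hα : ∀ x : Fˣ, x ∈ Subgroup.zpowers α) :
    (∀ i : ℕ, ∃ z : ℤ, gaussPeriod p F α N₂ i = (z : ℂ)) ∧
      ∃ ψ : Polynomial ℚ,
        ψ.map (algebraMap ℚ ℂ) =
          ∏ i ∈ Finset.range N₂,
            (Polynomial.X -
              Polynomial.C (1 + (N₂ : ℂ) * gaussPeriod p F α N₂ i)) ∧
        Polynomial.Splits ψ := by
  haveI : Fact p.Prime := ⟨hp⟩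
  haveI : NeZero p := ⟨hp.ne_zero⟩
  -- basic numerics
  have hq2 : 2 ≤ q := by
    have h1 : p ≤ p ^ s := Nat.le_self_pow hs.ne' p
    have := hp.two_le
    omega
  have hr2 : 2 ≤ r := by
    have h1 : q ≤ q ^ m := Nat.le_self_pow hm.ne' q
    omega
  have hq1pos : 0 < q - 1 := by omega
  have hdvdqr : (q - 1) ∣ (r - 1) := by
    rw [hr]; simpa using Nat.sub_dvd_pow_sub_pow q 1 m
  set d : ℕ := (r - 1) / (q - 1) with hdd
  have hd : (q - 1) * d = r - 1 := Nat.mul_div_cancel' hdvdqr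
  have hdpos : 0 < d := by
    rcases Nat.eq_zero_or_pos d with h | h
    · rw [h, mul_zero] at hd; omega
    · exact h
  have hN₂d : N₂ ∣ d := hN₂ ▸ Nat.gcd_dvd_right _ _
  have hN₂pos : 0 < N₂ := hN₂ ▸ Nat.gcd_pos_of_pos_right _ hdpos
  have hcardU : Fintype.card Fˣ = r - 1 := by rw [Fintype.card_units, hcardF]
  have hord : orderOf α = r - 1 := by
    rw [orderOf_eq_card_of_forall_mem_zpowers hα, Nat.card_eq_fintype_card, hcardU]
  have hpq1 : (p - 1) ∣ (q - 1) := by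
    rw [hq]; simpa using Nat.sub_dvd_pow_sub_pow p 1 s
  -- the key unit lemma: any unit from the prime field is a power of α^N₂
  have hU : ∀ u : Fˣ, (∃ t : ZMod p, t ≠ 0 ∧ (u : F) = algebraMap (ZMod p) F t) →
      ∃ e : ℕ, u = (α ^ N₂) ^ e := by
    rintro u ⟨t, ht, hu⟩
    obtain ⟨k, hk⟩ : u ∈ Submonoid.powers α := mem_powers_iff_mem_zpowers.mpr (hα u)
    dsimp only at hk
    have h1 : u ^ (p - 1) = 1 := Units.ext (by
      rw [Units.val_pow_eq_pow_val, hu, ← map_pow, ZMod.pow_card_sub_one_eq_one ht,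
        map_one, Units.val_one])
    have h2 : u ^ (q - 1) = 1 :=
      orderOf_dvd_iff_pow_eq_one.mp ((orderOf_dvd_of_pow_eq_one h1).trans hpq1)
    have h3 : (r - 1) ∣ k * (q - 1) := by
      rw [← hord]
      exact orderOf_dvd_of_pow_eq_one (by rw [pow_mul, hk, h2])
    have hdk : d ∣ k := by
      rw [← hd] at h3
      exact (Nat.mul_dvd_mul_iff_left hq1pos).mp (by rwa [mul_comm k] at h3)
    have hN₂k : N₂ ∣ k := hN₂d.trans hdk
    exact ⟨k / N₂, by rw [← pow_mul, Nat.mul_div_cancel' hN₂k, hk]⟩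
  -- part 1
  have part1 : ∀ i : ℕ, ∃ z : ℤ, gaussPeriod p F α N₂ i = (z : ℂ) := by
    intro i
    set S : Finset Fˣ :=
      Finset.univ.filter (fun x : Fˣ => ∃ j : ℕ, x = α ^ i * (α ^ N₂) ^ j) with hS
    set c : ZMod p → ℕ :=
      fun a => ((S.filter (fun x : Fˣ => Algebra.trace (ZMod p) F (x : F) = a)).card) with hc
    -- counts agree on nonzero trace values
    have hUnit : ∀ t : ZMod p, t ≠ 0 → ∃ u : Fˣ, (u : F) = algebraMap (ZMod p) F t :=
      fun t ht => ⟨Units.mk0 _ ((map_ne_zero (algebraMap (ZMod p) F)).mpr ht), rfl⟩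
    choose U hUs using hUnit
    have hmem : ∀ (a b : ZMod p) (ha : a ≠ 0) (hb : b ≠ 0),
        ∀ x ∈ S.filter (fun x : Fˣ => Algebra.trace (ZMod p) F (x : F) = a),
        U (b * a⁻¹) (mul_ne_zero hb (inv_ne_zero ha)) * x ∈
          S.filter (fun x : Fˣ => Algebra.trace (ZMod p) F (x : F) = b) := by
      intro a b ha hb x hx
      simp only [Finset.mem_filter, Finset.mem_univ, true_and, hS] at hx ⊢
      obtain ⟨⟨j, hj⟩, hxa⟩ := hx
      obtain ⟨e, he⟩ :=
        hU _ ⟨b * a⁻¹, mul_ne_zero hb (inv_ne_zero ha), hUs _ _⟩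
      refine ⟨⟨e + j, by rw [he, hj, pow_add, mul_left_comm]⟩, ?_⟩
      have hsm : ((U (b * a⁻¹) (mul_ne_zero hb (inv_ne_zero ha)) * x : Fˣ) : F) =
          (b * a⁻¹) • (x : F) := by
        rw [Units.val_mul, hUs, Algebra.smul_def]
      rw [hsm, LinearMap.map_smul, hxa, smul_eq_mul, mul_assoc,
        inv_mul_cancel₀ ha, mul_one]
    have hcc : ∀ a b : ZMod p, a ≠ 0 → b ≠ 0 → c a = c b := by
      intro a b ha hb
      have hab : a * b⁻¹ ≠ 0 := mul_ne_zero ha (inv_ne_zero hb)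
      have hba : b * a⁻¹ ≠ 0 := mul_ne_zero hb (inv_ne_zero ha)
      have hprod1 : U (a * b⁻¹) hab * U (b * a⁻¹) hba = 1 := Units.ext (by
        rw [Units.val_mul, hUs, hUs, ← map_mul,
          show (a * b⁻¹) * (b * a⁻¹) = 1 by field_simp, map_one, Units.val_one])
      have hprod2 : U (b * a⁻¹) hba * U (a * b⁻¹) hab = 1 := Units.ext (by
        rw [Units.val_mul, hUs, hUs, ← map_mul,
          show (b * a⁻¹) * (a * b⁻¹) = 1 by field_simp, map_one, Units.val_one])
      simp only [hc]
      refine Finset.card_bij' (fun x _ => U (b * a⁻¹) hba * x)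
        (fun x _ => U (a * b⁻¹) hab * x) (hmem a b ha hb) (hmem b a hb ha) ?_ ?_
      · intro x hx; rw [← mul_assoc, hprod1, one_mul]
      · intro x hx; rw [← mul_assoc, hprod2, one_mul]
    -- the root of unity
    set ζ : ℂ := Complex.exp (2 * Real.pi * Complex.I / p) with hζ
    have hpc : (p : ℂ) ≠ 0 := Nat.cast_ne_zero.mpr hp.ne_zero
    have hζp : ζ ^ p = 1 := by
      rw [hζ, ← Complex.exp_nat_mul]
      rw [show (p : ℂ) * (2 * Real.pi * Complex.I / p) = 2 * Real.pi * Complex.I by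
        field_simp]
      exact Complex.exp_two_pi_mul_I
    have hζ1 : ζ ≠ 1 := by
      rw [hζ]
      intro h
      obtain ⟨n, hn⟩ := Complex.exp_eq_one_iff.mp h
      have h0 : (2 * (Real.pi : ℂ) * Complex.I) ≠ 0 := by
        simp [Complex.I_ne_zero, Real.pi_ne_zero, Complex.ofReal_ne_zero]
      have h1 : (2 * (Real.pi : ℂ) * Complex.I) * 1 =
          (2 * (Real.pi : ℂ) * Complex.I) * (n * p) := by
        rw [mul_one]
        calc 2 * (Real.pi : ℂ) * Complex.I
            = (2 * (Real.pi : ℂ) * Complex.I / p) * p := by field_simp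
          _ = ((n : ℂ) * (2 * (Real.pi : ℂ) * Complex.I)) * p := by rw [hn]
          _ = _ := by ring
      have h2 : (1 : ℂ) = (n : ℂ) * p := mul_left_cancel₀ h0 h1
      have h3 : (1 : ℤ) = n * p := by exact_mod_cast h2
      have hple : (p : ℤ) ≤ 1 := Int.le_of_dvd one_pos ⟨n, by linarith⟩
      have hp2 : (2 : ℤ) ≤ p := by exact_mod_cast hp.two_le
      linarith
    have hsum0 : ∑ a : ZMod p, ζ ^ (a.val) = 0 := by
      have heq : ∑ a : ZMod p, ζ ^ (a.val) = ∑ v ∈ Finset.range p, ζ ^ v :=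
        Finset.sum_nbij' (fun a : ZMod p => a.val) (fun v : ℕ => (v : ZMod p))
          (fun a _ => Finset.mem_range.mpr (ZMod.val_lt a))
          (fun v _ => Finset.mem_univ _)
          (fun a _ => ZMod.natCast_rightInverse a)
          (fun v hv => ZMod.val_cast_of_lt (Finset.mem_range.mp hv))
          (fun a _ => rfl)
      rw [heq, geom_sum_eq hζ1, hζp, sub_self, zero_div]
    -- compute the Gauss period
    have hgp : gaussPeriod p F α N₂ i = ∑ a : ZMod p, (c a : ℂ) * ζ ^ (a.val) := by
      unfold gaussPeriod
      rw [← hS]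
      rw [← Finset.sum_fiberwise S (fun x : Fˣ => Algebra.trace (ZMod p) F (x : F))
        (fun x : Fˣ => Complex.exp (2 * Real.pi * Complex.I *
          ((Algebra.trace (ZMod p) F (x : F)).val : ℂ) / p))]
      apply Finset.sum_congr rfl
      intro a _
      rw [Finset.sum_congr rfl (fun x hx => ?_), Finset.sum_const, hc, nsmul_eq_mul]
      have hxa : Algebra.trace (ZMod p) F (x : F) = a := (Finset.mem_filter.mp hx).2
      rw [hxa, hζ, ← Complex.exp_nat_mul]
      congr 1
      ring
    refine ⟨(c 0 : ℤ) - c 1, ?_⟩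
    have h10 : (1 : ZMod p) ≠ 0 := one_ne_zero
    have hsplit : ∑ a : ZMod p, (c a : ℂ) * ζ ^ (a.val) =
        (c 0 : ℂ) + ∑ a ∈ Finset.univ.erase (0 : ZMod p), (c a : ℂ) * ζ ^ (a.val) := by
      rw [← Finset.add_sum_erase _ _ (Finset.mem_univ (0 : ZMod p))]
      simp [ZMod.val_zero]
    have hrest : ∑ a ∈ Finset.univ.erase (0 : ZMod p), (c a : ℂ) * ζ ^ (a.val) =
        (c 1 : ℂ) * ∑ a ∈ Finset.univ.erase (0 : ZMod p), ζ ^ (a.val) := by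
      rw [Finset.mul_sum]
      apply Finset.sum_congr rfl
      intro a ha
      rw [hcc a 1 (Finset.mem_erase.mp ha).1 h10]
    have hrest0 : ∑ a ∈ Finset.univ.erase (0 : ZMod p), ζ ^ (a.val) = -1 := by
      have h := Finset.add_sum_erase Finset.univ (fun a : ZMod p => ζ ^ (a.val))
        (Finset.mem_univ (0 : ZMod p))
      rw [hsum0] at h
      simp only [ZMod.val_zero, pow_zero] at h
      linear_combination h
    rw [hgp, hsplit, hrest, hrest0]
    push_cast
    ring
  refine ⟨part1, ?_⟩
  -- part 2
  choose z hz using part1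
  refine ⟨∏ i ∈ Finset.range N₂,
    (Polynomial.X - Polynomial.C ((1 : ℚ) + (N₂ : ℚ) * (z i : ℚ))), ?_, ?_⟩
  · rw [Polynomial.map_prod]
    apply Finset.prod_congr rfl
    intro i _
    rw [Polynomial.map_sub, Polynomial.map_X, Polynomial.map_C, hz i]
    congr 1
    rw [eq_ratCast (algebraMap ℚ ℂ)]
    push_cast
    ring
  · exact Polynomial.Splits.prod (fun j _ => Polynomial.Splits.X_sub_C _)
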